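/- Fix an integer r ≥ 1. The 3-color Ramsey number of the matching rK_2 equals 4r − 2. That is: (1) for every coloring of the edges of the complete graph K_{4r−2} with 3 colors, some color class contains r pairwise disjoint edges; and (2) there exists a coloring of the edges of K_{4r−3} with 3 colors in which no color class contains r pairwise disjoint edges. -/

import Mathlib

open Finset

/-- Two edges of a complete graph (elements of `Sym2 (Fin n)`) are disjoint if they
share no vertex. -/
def EdgeDisjoint {n : ℕ} (e f : Sym2 (Fin n)) : Prop := ∀ v, v ∈ e → v ∉ f

/-- A finite set of elements of `Sym2 (Fin n)` is a matching if each element is a genuine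
(non-loop) edge and the edges are pairwise disjoint. -/
def IsMatchingIn {n : ℕ} (M : Finset (Sym2 (Fin n))) : Prop :=
  (∀ e ∈ M, ¬ e.IsDiag) ∧ (M : Set (Sym2 (Fin n))).Pairwise EdgeDisjoint

/-- A history of the online Ramsey game on `K_n` with `t` colours: the list of
edges played so far, each together with the colour Painter gave it. -/
abbrev GameHistory (n t : ℕ) := List (Sym2 (Fin n) × Fin t)

/-- A Builder strategy: given the history so far, select the next edge. -/
abbrev BuilderStrategy (n t : ℕ) := GameHistory n t → Sym2 (Fin n)

/-- A Painter strategy: given the history so far and the newly selected edge,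
choose a colour for it. -/
abbrev PainterStrategy (n t : ℕ) := GameHistory n t → Sym2 (Fin n) → Fin t

/-- The history after `k` moves when Builder plays strategy `B` against Painter
strategy `P`. -/
def gamePlay {n t : ℕ} (B : BuilderStrategy n t) (P : PainterStrategy n t) :
    ℕ → GameHistory n t
  | 0 => []
  | k + 1 =>
      let h := gamePlay B P k
      h ++ [(B h, P h (B h))]

/-- Builder plays legally for the first `k` moves against `P`: every selected edge
is a genuine (non-loop) edge not selected before. -/
def BuilderValid {n t : ℕ} (B : BuilderStrategy n t) (P : PainterStrategy n t)
    (k : ℕ) : Prop :=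
  ∀ j < k, ¬ (B (gamePlay B P j)).IsDiag ∧
    B (gamePlay B P j) ∉ (gamePlay B P j).map Prod.fst

/-- The history `h` contains, for some colour `i`, a matching of `r i` edges all
coloured `i`. -/
def HistoryHasMatching (n t : ℕ) (r : Fin t → ℕ) (h : GameHistory n t) : Prop :=
  ∃ i : Fin t, ∃ M : Finset (Sym2 (Fin n)),
    M.card = r i ∧ IsMatchingIn M ∧ ∀ e ∈ M, (e, i) ∈ h

/-- Builder can force, within `k` legal moves on `K_n` with `t` colours, some colour
`i` to contain a matching of `r i` edges, against every Painter strategy. -/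
def BuilderWinsIn (n t : ℕ) (r : Fin t → ℕ) (k : ℕ) : Prop :=
  ∃ B : BuilderStrategy n t, (∀ P : PainterStrategy n t, BuilderValid B P k) ∧
    ∀ P : PainterStrategy n t, HistoryHasMatching n t r (gamePlay B P k)

/-- The restricted online Ramsey number `R̃(r₁K₂,…,r_tK₂; n)`: the least `k` such
that Builder can force a win within `k` moves. -/
noncomputable def restrictedOnlineRamsey (n t : ℕ) (r : Fin t → ℕ) : ℕ :=
  sInf {k | BuilderWinsIn n t r k}

/-- A colouring `c` of (the edges of) `K_N` with `t` colours contains, for some colour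
`i`, a matching of `r i` edges all coloured `i`. -/
def ColoringHasMatching (N t : ℕ) (r : Fin t → ℕ) (c : Sym2 (Fin N) → Fin t) : Prop :=
  ∃ i : Fin t, ∃ M : Finset (Sym2 (Fin N)),
    M.card = r i ∧ IsMatchingIn M ∧ ∀ e ∈ M, c e = i

/-- The classical Ramsey number `R(r₁K₂,…,r_tK₂)`: the least `N` such that every
`t`-colouring of the edges of `K_N` contains, for some `i`, a matching of `r i`
edges in colour `i`. -/
noncomputable def matchingRamsey (t : ℕ) (r : Fin t → ℕ) : ℕ :=
  sInf {N | ∀ c : Sym2 (Fin N) → Fin t, ColoringHasMatching N t r c}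

lemma sym2_rep {n : ℕ} (e : Sym2 (Fin n)) : ∃ x y, e = s(x,y) :=
  Sym2.inductionOn e (fun x y => ⟨x, y, rfl⟩)

lemma matching_subset {n : ℕ} {M M' : Finset (Sym2 (Fin n))} (h : M' ⊆ M)
    (hM : IsMatchingIn M) : IsMatchingIn M' :=
  ⟨fun e he => hM.1 e (h he), hM.2.mono (by exact_mod_cast h)⟩

lemma matching_insert {n : ℕ} {M : Finset (Sym2 (Fin n))} (hM : IsMatchingIn M)
    {g : Sym2 (Fin n)} (hg : ¬ g.IsDiag) {V' : Finset (Fin n)}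
    (hMV : ∀ e ∈ M, ∀ z ∈ e, z ∈ V') (hgV : ∀ z ∈ g, z ∉ V') :
    IsMatchingIn (insert g M) ∧ (insert g M).card = M.card + 1 := by
  obtain ⟨x, y, rfl⟩ := sym2_rep g
  have hxmem : x ∈ s(x,y) := by simp
  have hgM : s(x,y) ∉ M := fun h => hgV x hxmem (hMV _ h x hxmem)
  refine ⟨⟨?_, ?_⟩, Finset.card_insert_of_notMem hgM⟩
  · intro e he
    rcases Finset.mem_insert.1 he with rfl | he
    · exact hg
    · exact hM.1 e he
  · intro e he f hf hef
    simp only [Finset.coe_insert, Set.mem_insert_iff, Finset.mem_coe] at he hf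
    rcases he with rfl | he <;> rcases hf with rfl | hf
    · exact absurd rfl hef
    · intro v hv hv'; exact hgV v hv (hMV _ hf v hv')
    · intro v hv hv'; exact hgV v hv' (hMV _ he v hv)
    · exact hM.2 he hf hef

lemma lemA {n : ℕ} : ∀ (r : ℕ) (V : Finset (Fin n)), 2*r ≤ V.card →
    ∃ M : Finset (Sym2 (Fin n)), M.card = r ∧ IsMatchingIn M ∧ ∀ e ∈ M, ∀ z ∈ e, z ∈ V := by
  intro r
  induction r with
  | zero => exact fun V _ => ⟨∅, by simp, ⟨by simp, by simp⟩, by simp⟩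
  | succ r ih =>
    intro V hV
    have h1 : 1 < V.card := by omega
    obtain ⟨x, hx, y, hy, hxy⟩ := Finset.one_lt_card.mp h1
    have hsub : ({x, y} : Finset (Fin n)) ⊆ V := by
      intro z hz; simp only [Finset.mem_insert, Finset.mem_singleton] at hz
      rcases hz with rfl | rfl <;> assumption
    have hc2 : ({x, y} : Finset (Fin n)).card = 2 := by
      rw [Finset.card_insert_of_notMem (by simpa using hxy), Finset.card_singleton]
    obtain ⟨M, hcard, hmatch, hMV⟩ := ih (V \ {x, y}) (by
      rw [Finset.card_sdiff_of_subset hsub, hc2]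
      have := Finset.card_le_card hsub
      omega)
    have hdis : ∀ z ∈ s(x,y), z ∉ V \ ({x, y} : Finset (Fin n)) := by
      intro z hz
      simp only [Sym2.mem_iff] at hz
      simp only [Finset.mem_sdiff, Finset.mem_insert, Finset.mem_singleton, not_and, not_not]
      intro _; tauto
    obtain ⟨hm, hc⟩ := matching_insert hmatch (by simpa using hxy) hMV hdis
    refine ⟨insert s(x,y) M, by omega, hm, ?_⟩
    intro e he z hz
    rcases Finset.mem_insert.1 he with rfl | he
    · simp only [Sym2.mem_iff] at hz; rcases hz with rfl | rfl <;> assumption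
    · exact (Finset.mem_sdiff.1 (hMV e he z hz)).1

lemma find_pattern {n : ℕ} (c : Sym2 (Fin n) → Fin 3) {V : Finset (Fin n)} {a b : Fin 3}
    (hab : a ≠ b) {u v x y : Fin n} (hu : u ∈ V) (hv : v ∈ V) (hx : x ∈ V) (hy : y ∈ V)
    (huv : u ≠ v) (hxy : x ≠ y) (hea : c s(u,v) = a) (hfb : c s(x,y) = b) :
    (∃ p q s : Fin n, p ∈ V ∧ q ∈ V ∧ s ∈ V ∧ p ≠ q ∧ q ≠ s ∧ p ≠ s ∧
        c s(p,q) = a ∧ c s(q,s) = b) ∨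
    (u ≠ x ∧ u ≠ y ∧ v ≠ x ∧ v ≠ y ∧ c s(u,x) ≠ a ∧ c s(u,x) ≠ b) := by
  have hef : ¬ (s(u,v) : Sym2 (Fin n)) = s(x,y) := by
    intro h; rw [h] at hea; exact hab (hea.symm.trans hfb)
  by_cases h1 : u = x
  · subst h1
    left
    have hvy : v ≠ y := by rintro rfl; exact hef rfl
    exact ⟨v, u, y, hv, hu, hy, fun h => huv h.symm, hxy, hvy,
      by rwa [Sym2.eq_swap], hfb⟩
  by_cases h2 : u = y
  · subst h2
    left
    have hvx : v ≠ x := by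
      rintro rfl; exact hef (Sym2.eq_swap)
    exact ⟨v, u, x, hv, hu, hx, fun h => huv h.symm, fun h => h1 h.symm.symm, hvx,
      by rwa [Sym2.eq_swap], by rwa [Sym2.eq_swap]⟩
  by_cases h3 : v = x
  · subst h3
    left
    have huy : u ≠ y := by
      rintro rfl; exact hef (Sym2.eq_swap)
    exact ⟨u, v, y, hu, hv, hy, huv, hxy, huy, hea, hfb⟩
  by_cases h4 : v = y
  · subst h4
    left
    exact ⟨u, v, x, hu, hv, hx, huv, fun h => h3 h.symm.symm, h1, hea,
      by rwa [Sym2.eq_swap]⟩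
  -- all four distinct
  by_cases h5 : c s(u,x) = a
  · left; exact ⟨u, x, y, hu, hx, hy, h1, hxy, h2, h5, hfb⟩
  by_cases h6 : c s(u,x) = b
  · left
    exact ⟨v, u, x, hv, hu, hx, fun h => huv h.symm, h1, h3,
      by rwa [Sym2.eq_swap], h6⟩
  · right; exact ⟨h1, h2, h3, h4, h5, h6⟩

lemma lemB {n : ℕ} (c : Sym2 (Fin n) → Fin 3) {a b : Fin 3} (hab : a ≠ b) :
    ∀ (r : ℕ) (V : Finset (Fin n)),
    (∀ e : Sym2 (Fin n), ¬ e.IsDiag → (∀ z ∈ e, z ∈ V) → c e = a ∨ c e = b) →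
    3*r ≤ V.card + 1 →
    ∃ i : Fin 3, (i = a ∨ i = b) ∧ ∃ M : Finset (Sym2 (Fin n)), M.card = r ∧
      IsMatchingIn M ∧ (∀ e ∈ M, ∀ z ∈ e, z ∈ V) ∧ ∀ e ∈ M, c e = i := by
  intro r
  induction r with
  | zero => exact fun V _ _ => ⟨a, Or.inl rfl, ∅, by simp, ⟨by simp, by simp⟩, by simp, by simp⟩
  | succ r ih =>
    intro V hcol hV
    by_cases hA : ∀ e : Sym2 (Fin n), ¬ e.IsDiag → (∀ z ∈ e, z ∈ V) → c e = a
    · obtain ⟨M, hcard, hmatch, hMV⟩ := lemA (r+1) V (by omega)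
      exact ⟨a, Or.inl rfl, M, hcard, hmatch, hMV,
        fun e he => hA e (hmatch.1 e he) (hMV e he)⟩
    by_cases hB : ∀ e : Sym2 (Fin n), ¬ e.IsDiag → (∀ z ∈ e, z ∈ V) → c e = b
    · obtain ⟨M, hcard, hmatch, hMV⟩ := lemA (r+1) V (by omega)
      exact ⟨b, Or.inr rfl, M, hcard, hmatch, hMV,
        fun e he => hB e (hmatch.1 e he) (hMV e he)⟩
    push_neg at hA hB
    obtain ⟨f, hfd, hfV, hfa⟩ := hA
    obtain ⟨e, hed, heV, heb⟩ := hB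
    have hea : c e = a := (hcol e hed heV).resolve_right heb
    have hfb : c f = b := (hcol f hfd hfV).resolve_left hfa
    obtain ⟨u, v, rfl⟩ := sym2_rep e
    obtain ⟨x, y, rfl⟩ := sym2_rep f
    have huv : u ≠ v := by simpa using hed
    have hxy : x ≠ y := by simpa using hfd
    have hu : u ∈ V := heV u (by simp)
    have hv : v ∈ V := heV v (by simp)
    have hx : x ∈ V := hfV x (by simp)
    have hy : y ∈ V := hfV y (by simp)
    rcases find_pattern c hab hu hv hx hy huv hxy hea hfb with
      ⟨p, q, s, hp, hq, hs, hpq, hqs, hps, hcpq, hcqs⟩ | ⟨h1, h2, h3, h4, h5, h6⟩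
    · -- recurse on V minus {p,q,s}
      have hTsub : ({p, q, s} : Finset (Fin n)) ⊆ V := by
        intro z hz
        simp only [Finset.mem_insert, Finset.mem_singleton] at hz
        rcases hz with rfl | rfl | rfl <;> assumption
      have hT3 : ({p, q, s} : Finset (Fin n)).card = 3 := by
        rw [Finset.card_insert_of_notMem (by simp [hpq, hps]),
          Finset.card_insert_of_notMem (by simp [hqs]), Finset.card_singleton]
      have hVT : (V \ {p, q, s}).card = V.card - 3 := by
        rw [Finset.card_sdiff_of_subset hTsub, hT3]
      have hle := Finset.card_le_card hTsub
      obtain ⟨i, hi, M, hcard, hmatch, hMV, hMc⟩ := ih (V \ {p, q, s})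
        (fun e hd hVe => hcol e hd (fun z hz => (Finset.mem_sdiff.1 (hVe z hz)).1))
        (by omega)
      have hext : ∀ (g : Sym2 (Fin n)), ¬ g.IsDiag → (∀ z ∈ g, z ∈ ({p,q,s} : Finset (Fin n))) →
          c g = i →
          ∃ i' : Fin 3, (i' = a ∨ i' = b) ∧ ∃ M' : Finset (Sym2 (Fin n)), M'.card = r + 1 ∧
            IsMatchingIn M' ∧ (∀ e ∈ M', ∀ z ∈ e, z ∈ V) ∧ ∀ e ∈ M', c e = i' := by
        intro g hgd hgT hgc
        have hgV' : ∀ z ∈ g, z ∉ V \ ({p,q,s} : Finset (Fin n)) := by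
          intro z hz hz'
          exact (Finset.mem_sdiff.1 hz').2 (hgT z hz)
        obtain ⟨hm, hc⟩ := matching_insert hmatch hgd hMV hgV'
        refine ⟨i, hi, insert g M, by omega, hm, ?_, ?_⟩
        · intro e' he' z hz
          rcases Finset.mem_insert.1 he' with rfl | he'
          · exact hTsub (hgT z hz)
          · exact (Finset.mem_sdiff.1 (hMV e' he' z hz)).1
        · intro e' he'
          rcases Finset.mem_insert.1 he' with rfl | he'
          · exact hgc
          · exact hMc e' he'
      rcases hi with rfl | rfl
      · obtain ⟨i', hi', h⟩ := hext s(p,q) (by simpa using hpq)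
          (by intro z hz; simp only [Sym2.mem_iff] at hz
              simp only [Finset.mem_insert, Finset.mem_singleton]; tauto) hcpq
        exact ⟨i', hi', h⟩
      · obtain ⟨i', hi', h⟩ := hext s(q,s) (by simpa using hqs)
          (by intro z hz; simp only [Sym2.mem_iff] at hz
              simp only [Finset.mem_insert, Finset.mem_singleton]; tauto) hcqs
        exact ⟨i', hi', h⟩
    · -- impossible : edge s(u,x) must be coloured a or b
      have : c s(u,x) = a ∨ c s(u,x) = b := by
        refine hcol _ (by simpa using h1) ?_
        intro z hz
        simp only [Sym2.mem_iff] at hz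
        rcases hz with rfl | rfl <;> assumption
      tauto

lemma card4 {α : Type*} [DecidableEq α] {a b c d : α} (h1 : a ≠ b) (h2 : a ≠ c) (h3 : a ≠ d)
    (h4 : b ≠ c) (h5 : b ≠ d) (h6 : c ≠ d) : ({a, b, c, d} : Finset α).card = 4 := by
  rw [Finset.card_insert_of_notMem (by simp [h1, h2, h3]),
    Finset.card_insert_of_notMem (by simp [h4, h5]),
    Finset.card_insert_of_notMem (by simp [h6]), Finset.card_singleton]

lemma edge_in {n : ℕ} {w z : Fin n} {T : Finset (Fin n)} (hw : w ∈ T) (hz : z ∈ T) :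
    ∀ t ∈ (s(w,z) : Sym2 (Fin n)), t ∈ T := by
  intro t ht
  simp only [Sym2.mem_iff] at ht
  rcases ht with rfl | rfl <;> assumption

set_option maxHeartbeats 2000000 in
lemma lemC {n : ℕ} (c : Sym2 (Fin n) → Fin 3) :
    ∀ (r : ℕ) (V : Finset (Fin n)), 4*r ≤ V.card + 2 →
    ∃ i : Fin 3, ∃ M : Finset (Sym2 (Fin n)), M.card = r ∧
      IsMatchingIn M ∧ (∀ e ∈ M, ∀ z ∈ e, z ∈ V) ∧ ∀ e ∈ M, c e = i := by
  intro r
  induction r with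
  | zero => exact fun V _ => ⟨0, ∅, by simp, ⟨by simp, by simp⟩, by simp, by simp⟩
  | succ r ih =>
    intro V hV
    rcases Nat.eq_zero_or_pos r with rfl | hrpos
    · -- target a single edge
      have h1 : 1 < V.card := by omega
      obtain ⟨x, hx, y, hy, hxy⟩ := Finset.one_lt_card.mp h1
      refine ⟨c s(x,y), {s(x,y)}, by simp, ⟨?_, ?_⟩, ?_, by simp⟩
      · intro e he; simp only [Finset.mem_singleton] at he; subst he; simpa using hxy
      · simp only [Finset.coe_singleton]; exact Set.pairwise_singleton _ _
      · intro e he; simp only [Finset.mem_singleton] at he; subst he; exact edge_in hx hy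
    by_cases hall : ∀ i : Fin 3, ∃ g : Sym2 (Fin n), ¬ g.IsDiag ∧ (∀ z ∈ g, z ∈ V) ∧ c g = i
    · -- all three colours appear within V : find a 4-set spanning all colours
      suffices hquad : ∃ T : Finset (Fin n), T ⊆ V ∧ T.card = 4 ∧
          ∀ i : Fin 3, ∃ g : Sym2 (Fin n), ¬ g.IsDiag ∧ (∀ z ∈ g, z ∈ T) ∧ c g = i by
        obtain ⟨T, hTV, hT4, hTcol⟩ := hquad
        obtain ⟨i, M, hcard, hmatch, hMV, hMc⟩ := ih (V \ T) (by
          rw [Finset.card_sdiff_of_subset hTV, hT4]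
          have := Finset.card_le_card hTV
          omega)
        obtain ⟨g, hgd, hgT, hgc⟩ := hTcol i
        obtain ⟨hm, hc⟩ := matching_insert hmatch hgd hMV
          (fun z hz hz' => (Finset.mem_sdiff.1 hz').2 (hgT z hz))
        refine ⟨i, insert g M, by omega, hm, ?_, ?_⟩
        · intro e he z hz
          rcases Finset.mem_insert.1 he with rfl | he
          · exact hTV (hgT z hz)
          · exact (Finset.mem_sdiff.1 (hMV e he z hz)).1
        · intro e he
          rcases Finset.mem_insert.1 he with rfl | he
          · exact hgc
          · exact hMc e he
      obtain ⟨e0, he0d, he0V, he0c⟩ := hall 0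
      obtain ⟨e1, he1d, he1V, he1c⟩ := hall 1
      obtain ⟨e2, he2d, he2V, he2c⟩ := hall 2
      obtain ⟨u, v, rfl⟩ := sym2_rep e0
      obtain ⟨x', y', rfl⟩ := sym2_rep e1
      have huv : u ≠ v := by simpa using he0d
      have hxy' : x' ≠ y' := by simpa using he1d
      rcases find_pattern c (show (0 : Fin 3) ≠ 1 by decide) (he0V u (by simp))
          (he0V v (by simp)) (he1V x' (by simp)) (he1V y' (by simp)) huv hxy' he0c he1c with
        ⟨p, q, s, hp, hq, hs, hpq, hqs, hps, hcpq, hcqs⟩ | ⟨h1, h2, h3, h4, h5, h6⟩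
      · -- we have a path p-q-s with colours 0,1 ; combine with a colour-2 edge
        obtain ⟨x, y, rfl⟩ := sym2_rep e2
        have hxy : x ≠ y := by simpa using he2d
        have hxV : x ∈ V := he2V x (by simp)
        have hyV : y ∈ V := he2V y (by simp)
        have hfin : ∀ i : Fin 3, i = 0 ∨ i = 1 ∨ i = 2 := by decide
        by_cases hxT : x = p ∨ x = q ∨ x = s
        · by_cases hyT : y = p ∨ y = q ∨ y = s
          · -- both ends of the colour-2 edge inside the triple: pad with extra vertex
            have hTsub : ({p, q, s} : Finset (Fin n)) ⊆ V := by
              intro z hz; simp only [Finset.mem_insert, Finset.mem_singleton] at hz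
              rcases hz with rfl | rfl | rfl <;> assumption
            have hT3 : ({p, q, s} : Finset (Fin n)).card = 3 := by
              rw [Finset.card_insert_of_notMem (by simp [hpq, hps]),
                Finset.card_insert_of_notMem (by simp [hqs]), Finset.card_singleton]
            have hne : (V \ ({p, q, s} : Finset (Fin n))).Nonempty := by
              rw [← Finset.card_pos, Finset.card_sdiff_of_subset hTsub, hT3]; omega
            obtain ⟨t, ht⟩ := hne
            obtain ⟨htV, htT⟩ := Finset.mem_sdiff.1 ht
            simp only [Finset.mem_insert, Finset.mem_singleton, not_or] at htT
            obtain ⟨htp, htq, hts⟩ := htT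
            refine ⟨{p, q, s, t}, ?_, card4 hpq hps (Ne.symm htp) hqs (Ne.symm htq) (Ne.symm hts), ?_⟩
            · intro z hz
              simp only [Finset.mem_insert, Finset.mem_singleton] at hz
              rcases hz with rfl | rfl | rfl | rfl <;> assumption
            · intro i
              have hmem : ∀ w : Fin n, (w = p ∨ w = q ∨ w = s) → w ∈ ({p,q,s,t} : Finset (Fin n)) := by
                intro w hw; simp only [Finset.mem_insert, Finset.mem_singleton]; tauto
              rcases hfin i with rfl | rfl | rfl
              · exact ⟨s(p,q), by simpa using hpq,
                  edge_in (hmem p (by tauto)) (hmem q (by tauto)), hcpq⟩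
              · exact ⟨s(q,s), by simpa using hqs,
                  edge_in (hmem q (by tauto)) (hmem s (by tauto)), hcqs⟩
              · exact ⟨s(x,y), by simpa using hxy, edge_in (hmem x hxT) (hmem y hyT), he2c⟩
          · -- y outside the triple
            simp only [not_or] at hyT
            obtain ⟨hyp, hyq, hys⟩ := hyT
            refine ⟨{p, q, s, y}, ?_, card4 hpq hps (Ne.symm hyp) hqs (Ne.symm hyq) (Ne.symm hys), ?_⟩
            · intro z hz
              simp only [Finset.mem_insert, Finset.mem_singleton] at hz
              rcases hz with rfl | rfl | rfl | rfl <;> assumption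
            · intro i
              have hmem : ∀ w : Fin n, (w = p ∨ w = q ∨ w = s ∨ w = y) → w ∈ ({p,q,s,y} : Finset (Fin n)) := by
                intro w hw; simp only [Finset.mem_insert, Finset.mem_singleton]; tauto
              rcases hfin i with rfl | rfl | rfl
              · exact ⟨s(p,q), by simpa using hpq,
                  edge_in (hmem p (by tauto)) (hmem q (by tauto)), hcpq⟩
              · exact ⟨s(q,s), by simpa using hqs,
                  edge_in (hmem q (by tauto)) (hmem s (by tauto)), hcqs⟩
              · exact ⟨s(x,y), by simpa using hxy,
                  edge_in (hmem x (by tauto)) (hmem y (by tauto)), he2c⟩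
        by_cases hyT : y = p ∨ y = q ∨ y = s
        · -- x outside the triple
          simp only [not_or] at hxT
          obtain ⟨hxp, hxq, hxs⟩ := hxT
          refine ⟨{p, q, s, x}, ?_, card4 hpq hps (Ne.symm hxp) hqs (Ne.symm hxq) (Ne.symm hxs), ?_⟩
          · intro z hz
            simp only [Finset.mem_insert, Finset.mem_singleton] at hz
            rcases hz with rfl | rfl | rfl | rfl <;> assumption
          · intro i
            have hmem : ∀ w : Fin n, (w = p ∨ w = q ∨ w = s ∨ w = x) → w ∈ ({p,q,s,x} : Finset (Fin n)) := by
              intro w hw; simp only [Finset.mem_insert, Finset.mem_singleton]; tauto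
            rcases hfin i with rfl | rfl | rfl
            · exact ⟨s(p,q), by simpa using hpq,
                edge_in (hmem p (by tauto)) (hmem q (by tauto)), hcpq⟩
            · exact ⟨s(q,s), by simpa using hqs,
                edge_in (hmem q (by tauto)) (hmem s (by tauto)), hcqs⟩
            · exact ⟨s(x,y), by simpa using hxy,
                edge_in (hmem x (by tauto)) (hmem y (by tauto)), he2c⟩
        · -- x, y both outside the triple: trichotomy on the colour of s(q,x)
          simp only [not_or] at hxT hyT
          obtain ⟨hxp, hxq, hxs⟩ := hxT
          obtain ⟨hyp, hyq, hys⟩ := hyT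
          rcases hfin (c s(q,x)) with hc0 | hc1 | hc2
          · -- T = {x,y,q,s} : qx(0), qs(1), xy(2)
            refine ⟨{x, y, q, s}, ?_, card4 hxy hxq hxs hyq hys hqs, ?_⟩
            · intro z hz
              simp only [Finset.mem_insert, Finset.mem_singleton] at hz
              rcases hz with rfl | rfl | rfl | rfl <;> assumption
            · intro i
              have hmem : ∀ w : Fin n, (w = x ∨ w = y ∨ w = q ∨ w = s) → w ∈ ({x,y,q,s} : Finset (Fin n)) := by
                intro w hw; simp only [Finset.mem_insert, Finset.mem_singleton]; tauto
              rcases hfin i with rfl | rfl | rfl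
              · exact ⟨s(q,x), by simpa using fun h => hxq h.symm,
                  edge_in (hmem q (by tauto)) (hmem x (by tauto)), hc0⟩
              · exact ⟨s(q,s), by simpa using hqs,
                  edge_in (hmem q (by tauto)) (hmem s (by tauto)), hcqs⟩
              · exact ⟨s(x,y), by simpa using hxy,
                  edge_in (hmem x (by tauto)) (hmem y (by tauto)), he2c⟩
          · -- T = {p,q,x,y} : pq(0), qx(1), xy(2)
            refine ⟨{p, q, x, y}, ?_, card4 hpq (Ne.symm hxp) (Ne.symm hyp) (Ne.symm hxq) (Ne.symm hyq) hxy, ?_⟩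
            · intro z hz
              simp only [Finset.mem_insert, Finset.mem_singleton] at hz
              rcases hz with rfl | rfl | rfl | rfl <;> assumption
            · intro i
              have hmem : ∀ w : Fin n, (w = p ∨ w = q ∨ w = x ∨ w = y) → w ∈ ({p,q,x,y} : Finset (Fin n)) := by
                intro w hw; simp only [Finset.mem_insert, Finset.mem_singleton]; tauto
              rcases hfin i with rfl | rfl | rfl
              · exact ⟨s(p,q), by simpa using hpq,
                  edge_in (hmem p (by tauto)) (hmem q (by tauto)), hcpq⟩
              · exact ⟨s(q,x), by simpa using fun h => hxq h.symm,
                  edge_in (hmem q (by tauto)) (hmem x (by tauto)), hc1⟩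
              · exact ⟨s(x,y), by simpa using hxy,
                  edge_in (hmem x (by tauto)) (hmem y (by tauto)), he2c⟩
          · -- T = {p,q,s,x} : pq(0), qs(1), qx(2)
            refine ⟨{p, q, s, x}, ?_, card4 hpq hps (Ne.symm hxp) hqs (Ne.symm hxq) (Ne.symm hxs), ?_⟩
            · intro z hz
              simp only [Finset.mem_insert, Finset.mem_singleton] at hz
              rcases hz with rfl | rfl | rfl | rfl <;> assumption
            · intro i
              have hmem : ∀ w : Fin n, (w = p ∨ w = q ∨ w = s ∨ w = x) → w ∈ ({p,q,s,x} : Finset (Fin n)) := by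
                intro w hw; simp only [Finset.mem_insert, Finset.mem_singleton]; tauto
              rcases hfin i with rfl | rfl | rfl
              · exact ⟨s(p,q), by simpa using hpq,
                  edge_in (hmem p (by tauto)) (hmem q (by tauto)), hcpq⟩
              · exact ⟨s(q,s), by simpa using hqs,
                  edge_in (hmem q (by tauto)) (hmem s (by tauto)), hcqs⟩
              · exact ⟨s(q,x), by simpa using fun h => hxq h.symm,
                  edge_in (hmem q (by tauto)) (hmem x (by tauto)), hc2⟩
      · -- the connecting edge s(u,x') has colour 2 : quad {u,v,x',y'}
        have hfin : ∀ i : Fin 3, i = 0 ∨ i = 1 ∨ i = 2 := by decide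
        have hc2' : c s(u,x') = 2 := by
          rcases hfin (c s(u,x')) with h | h | h
          · exact absurd h h5
          · exact absurd h h6
          · exact h
        refine ⟨{u, v, x', y'}, ?_, card4 huv h1 h2 h3 h4 hxy', ?_⟩
        · intro z hz
          simp only [Finset.mem_insert, Finset.mem_singleton] at hz
          rcases hz with rfl | rfl | rfl | rfl
          · exact he0V _ (by simp)
          · exact he0V _ (by simp)
          · exact he1V _ (by simp)
          · exact he1V _ (by simp)
        · intro i
          have hmem : ∀ w : Fin n, (w = u ∨ w = v ∨ w = x' ∨ w = y') → w ∈ ({u,v,x',y'} : Finset (Fin n)) := by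
            intro w hw; simp only [Finset.mem_insert, Finset.mem_singleton]; tauto
          rcases hfin i with rfl | rfl | rfl
          · exact ⟨s(u,v), by simpa using huv,
              edge_in (hmem u (by tauto)) (hmem v (by tauto)), he0c⟩
          · exact ⟨s(x',y'), by simpa using hxy',
              edge_in (hmem x' (by tauto)) (hmem y' (by tauto)), he1c⟩
          · exact ⟨s(u,x'), by simpa using h1,
              edge_in (hmem u (by tauto)) (hmem x' (by tauto)), hc2'⟩
    · -- some colour is missing: two-colour case
      push_neg at hall
      obtain ⟨k, hk⟩ := hall
      have key : ∀ (k z : Fin 3), z ≠ k → z = k + 1 ∨ z = k + 2 := by decide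
      have hab := (show ∀ k : Fin 3, k + 1 ≠ k + 2 by decide) k
      obtain ⟨i, _, M, hcard, hmatch, hMV, hMc⟩ := lemB c hab (r+1) V
        (fun e hd hVe => key k (c e) (hk e hd hVe)) (by omega)
      exact ⟨i, M, hcard, hmatch, hMV, hMc⟩

lemma two_mul_card_le {n : ℕ} : ∀ (m : ℕ) (M : Finset (Sym2 (Fin n))) (W : Finset (Fin n)),
    M.card = m → IsMatchingIn M → (∀ e ∈ M, ∀ z ∈ e, z ∈ W) → 2 * m ≤ W.card := by
  intro m
  induction m with
  | zero => intro _ _ _ _ _; omega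
  | succ m ih =>
    intro M W hcard hM hMW
    have hne : M.Nonempty := Finset.card_pos.mp (by omega)
    obtain ⟨e, he⟩ := hne
    obtain ⟨x, y, rfl⟩ := sym2_rep e
    have hxy : x ≠ y := by simpa using hM.1 _ he
    have hx : x ∈ W := hMW _ he x (by simp)
    have hy : y ∈ W := hMW _ he y (by simp)
    have hsub : ({x, y} : Finset (Fin n)) ⊆ W := by
      intro z hz; simp only [Finset.mem_insert, Finset.mem_singleton] at hz
      rcases hz with rfl | rfl <;> assumption
    have hc2 : ({x, y} : Finset (Fin n)).card = 2 := by
      rw [Finset.card_insert_of_notMem (by simpa using hxy), Finset.card_singleton]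
    have hW' : ∀ f ∈ M.erase s(x,y), ∀ z ∈ f, z ∈ W \ {x, y} := by
      intro f hf z hz
      have hfM := Finset.mem_of_mem_erase hf
      have hne' : f ≠ s(x,y) := Finset.ne_of_mem_erase hf
      have hdis := hM.2 (Finset.mem_coe.mpr hfM) (Finset.mem_coe.mpr he) hne'
      have hzn := hdis z hz
      simp only [Sym2.mem_iff, not_or] at hzn
      simp only [Finset.mem_sdiff, Finset.mem_insert, Finset.mem_singleton, not_or]
      exact ⟨hMW _ hfM z hz, hzn⟩
    have hrec := ih (M.erase s(x,y)) (W \ {x, y})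
      (by rw [Finset.card_erase_of_mem he]; omega)
      (matching_subset (Finset.erase_subset _ _) hM) hW'
    have hle := Finset.card_le_card hsub
    rw [Finset.card_sdiff_of_subset hsub, hc2] at hrec
    omega

lemma card_le_cover {n : ℕ} : ∀ (m : ℕ) (M : Finset (Sym2 (Fin n))) (W : Finset (Fin n)),
    M.card = m → IsMatchingIn M → (∀ e ∈ M, ∃ z ∈ e, z ∈ W) → m ≤ W.card := by
  intro m
  induction m with
  | zero => intro _ _ _ _ _; omega
  | succ m ih =>
    intro M W hcard hM hMW
    have hne : M.Nonempty := Finset.card_pos.mp (by omega)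
    obtain ⟨e, he⟩ := hne
    obtain ⟨z, hze, hzW⟩ := hMW e he
    have hW' : ∀ f ∈ M.erase e, ∃ z' ∈ f, z' ∈ W.erase z := by
      intro f hf
      obtain ⟨z', hz'f, hz'W⟩ := hMW f (Finset.mem_of_mem_erase hf)
      refine ⟨z', hz'f, Finset.mem_erase.mpr ⟨?_, hz'W⟩⟩
      rintro rfl
      exact hM.2 (Finset.mem_coe.mpr he) (Finset.mem_coe.mpr (Finset.mem_of_mem_erase hf))
        (Finset.ne_of_mem_erase hf).symm z' hze hz'f
    have hrec := ih (M.erase e) (W.erase z)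
      (by rw [Finset.card_erase_of_mem he]; omega)
      (matching_subset (Finset.erase_subset _ _) hM) hW'
    have hzW' : z ∈ W := hzW
    rw [Finset.card_erase_of_mem hzW'] at hrec
    have : 0 < W.card := Finset.card_pos.mpr ⟨z, hzW'⟩
    omega

def lowerCol (r : ℕ) : Sym2 (Fin (4*r-3)) → Fin 3 :=
  Sym2.lift ⟨fun u v =>
    if u.val < 2*r-1 ∧ v.val < 2*r-1 then 0
    else if (2*r-1 ≤ u.val ∧ u.val < 3*r-2) ∨ (2*r-1 ≤ v.val ∧ v.val < 3*r-2) then 1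
    else 2, by
      intro u v
      by_cases h1 : u.val < 2*r-1 ∧ v.val < 2*r-1 <;>
        by_cases h2 : (2*r-1 ≤ u.val ∧ u.val < 3*r-2) ∨ (2*r-1 ≤ v.val ∧ v.val < 3*r-2) <;>
        simp [h1, h2, and_comm, or_comm]⟩

lemma lowerCol_mk (r : ℕ) (u v : Fin (4*r-3)) : lowerCol r s(u,v) =
    if u.val < 2*r-1 ∧ v.val < 2*r-1 then 0
    else if (2*r-1 ≤ u.val ∧ u.val < 3*r-2) ∨ (2*r-1 ≤ v.val ∧ v.val < 3*r-2) then 1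
    else 2 := Sym2.lift_mk _ _ _

/-- For `r ≥ 1`, the 3-colour Ramsey number of `rK₂` equals `4r − 2`. -/
theorem ramsey_three_colour_matching (r : ℕ) (hr : 1 ≤ r) :
    (∀ c : Sym2 (Fin (4 * r - 2)) → Fin 3,
        ColoringHasMatching (4 * r - 2) 3 (fun _ => r) c) ∧
      (∃ c : Sym2 (Fin (4 * r - 3)) → Fin 3,
        ¬ ColoringHasMatching (4 * r - 3) 3 (fun _ => r) c) := by
  constructor
  · intro c
    obtain ⟨i, M, hcard, hmatch, _, hMc⟩ := lemC c r Finset.univ (by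
      rw [Finset.card_univ, Fintype.card_fin]; omega)
    exact ⟨i, M, hcard, hmatch, hMc⟩
  · refine ⟨lowerCol r, ?_⟩
    rintro ⟨i, M, hcard, hmatch, hcol⟩
    have hcard' : M.card = r := hcard
    fin_cases i
    · -- colour 0 : all edges inside A = {w | w < 2r-1}
      have hA : ∀ e ∈ M, ∀ z ∈ e,
          z ∈ Finset.univ.filter (fun w : Fin (4*r-3) => w.val < 2*r-1) := by
        intro e he z hz
        obtain ⟨u, v, rfl⟩ := sym2_rep e
        have h := hcol _ he
        rw [lowerCol_mk] at h
        split_ifs at h with h1 h2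
        · simp only [Finset.mem_filter, Finset.mem_univ, true_and]
          simp only [Sym2.mem_iff] at hz
          rcases hz with rfl | rfl
          · exact h1.1
          · exact h1.2
        · exact absurd h (by decide)
        · exact absurd h (by decide)
      have h2m := two_mul_card_le r M _ hcard' hmatch hA
      have hcA : (Finset.univ.filter (fun w : Fin (4*r-3) => w.val < 2*r-1)).card
          ≤ (Finset.range (2*r-1)).card :=
        Finset.card_le_card_of_injOn Fin.val (fun w hw => by
          simp only [Finset.coe_filter, Finset.mem_coe, Finset.mem_filter, Set.mem_setOf_eq] at hw
          exact Finset.mem_range.mpr hw.2) (Fin.val_injective.injOn)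
      rw [Finset.card_range] at hcA
      omega
    · -- colour 1 : every edge meets B = {w | 2r-1 ≤ w < 3r-2}
      have hB : ∀ e ∈ M, ∃ z ∈ e,
          z ∈ Finset.univ.filter (fun w : Fin (4*r-3) => 2*r-1 ≤ w.val ∧ w.val < 3*r-2) := by
        intro e he
        obtain ⟨u, v, rfl⟩ := sym2_rep e
        have h := hcol _ he
        rw [lowerCol_mk] at h
        split_ifs at h with h1 h2
        · exact absurd h (by decide)
        · rcases h2 with h2 | h2
          · exact ⟨u, by simp, by simp only [Finset.mem_filter, Finset.mem_univ, true_and]; exact h2⟩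
          · exact ⟨v, by simp, by simp only [Finset.mem_filter, Finset.mem_univ, true_and]; exact h2⟩
        · exact absurd h (by decide)
      have hcle := card_le_cover r M _ hcard' hmatch hB
      have hcB : (Finset.univ.filter (fun w : Fin (4*r-3) => 2*r-1 ≤ w.val ∧ w.val < 3*r-2)).card
          ≤ (Finset.Ico (2*r-1) (3*r-2)).card :=
        Finset.card_le_card_of_injOn Fin.val (fun w hw => by
          simp only [Finset.coe_filter, Finset.mem_coe, Finset.mem_filter, Set.mem_setOf_eq] at hw
          exact Finset.mem_Ico.mpr hw.2) (Fin.val_injective.injOn)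
      rw [Nat.card_Ico] at hcB
      omega
    · -- colour 2 : every edge meets C = {w | 3r-2 ≤ w}
      have hC : ∀ e ∈ M, ∃ z ∈ e,
          z ∈ Finset.univ.filter (fun w : Fin (4*r-3) => 3*r-2 ≤ w.val) := by
        intro e he
        obtain ⟨u, v, rfl⟩ := sym2_rep e
        have h := hcol _ he
        rw [lowerCol_mk] at h
        split_ifs at h with h1 h2
        · exact absurd h (by decide)
        · exact absurd h (by decide)
        · by_cases hu : u.val < 2*r-1
          · exact ⟨v, by simp, by
              simp only [Finset.mem_filter, Finset.mem_univ, true_and]; omega⟩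
          · exact ⟨u, by simp, by
              simp only [Finset.mem_filter, Finset.mem_univ, true_and]; omega⟩
      have hcle := card_le_cover r M _ hcard' hmatch hC
      have hcC : (Finset.univ.filter (fun w : Fin (4*r-3) => 3*r-2 ≤ w.val)).card
          ≤ (Finset.Ico (3*r-2) (4*r-3)).card :=
        Finset.card_le_card_of_injOn Fin.val (fun w hw => by
          simp only [Finset.coe_filter, Finset.mem_coe, Finset.mem_filter, Set.mem_setOf_eq] at hw
          exact Finset.mem_Ico.mpr ⟨hw.2, w.isLt⟩) (Fin.val_injective.injOn)
      rw [Nat.card_Ico] at hcC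
      omega
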